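/- Let d ≥ 1, m ≥ 1, let Ω ⊆ ℝ^d be open and let f : Ω → ℝ^m be differentiable at every point of Ω. For x ∈ Ω let T_x := {(v, Df(x)v) : v ∈ ℝ^d} ⊆ ℝ^d × ℝ^m be the tangent space of the graph of f at (x, f(x)) and N_x := T_x^⊥ its orthogonal complement (the normal space). Then for every x₀ ∈ Ω there exists ε > 0 such that the open ball in ℝ^d × ℝ^m of radius ε centred at (x₀, f(x₀)) is contained in the union of affine normal spaces ⋃_{x ∈ Ω} ((x, f(x)) + N_x). In particular this union of normal spaces contains an open neighborhood of the graph of f, and has nonempty interior. -/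

import Mathlib

open Metric

local notation "⟪" x ", " y "⟫" => @inner ℝ _ _ x y

/-- the union of the affine normal spaces of the graph of a differentiable
map contains an open ball around each point of the graph. Here the graph lives in the
Euclidean product `WithLp 2 (ℝ^d × ℝ^m)`, tangent spaces are the graphs of the
derivatives, and normal spaces are their orthogonal complements. -/
theorem stmt_4 (d m : ℕ) (hd : 1 ≤ d) (hm : 1 ≤ m)
    (Ω : Set (EuclideanSpace ℝ (Fin d))) (hΩ : IsOpen Ω)
    (f : EuclideanSpace ℝ (Fin d) → EuclideanSpace ℝ (Fin m))
    (Df : EuclideanSpace ℝ (Fin d) →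
      (EuclideanSpace ℝ (Fin d) →L[ℝ] EuclideanSpace ℝ (Fin m)))
    (hf : ∀ x ∈ Ω, HasFDerivAt f (Df x) x)
    (x₀ : EuclideanSpace ℝ (Fin d)) (hx₀ : x₀ ∈ Ω) :
    ∃ ε > 0, Metric.ball
        ((WithLp.equiv 2 (EuclideanSpace ℝ (Fin d) × EuclideanSpace ℝ (Fin m))).symm
          (x₀, f x₀)) ε ⊆
      {p : WithLp 2 (EuclideanSpace ℝ (Fin d) × EuclideanSpace ℝ (Fin m)) |
        ∃ x ∈ Ω, ∃ w ∈ (Submodule.span ℝ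
            {q : WithLp 2 (EuclideanSpace ℝ (Fin d) × EuclideanSpace ℝ (Fin m)) |
              ∃ v : EuclideanSpace ℝ (Fin d),
                q = (WithLp.equiv 2 _).symm (v, Df x v)})ᗮ,
          p = (WithLp.equiv 2 _).symm (x, f x) + w} := by
  classical
  let E := EuclideanSpace ℝ (Fin d)
  let V := EuclideanSpace ℝ (Fin m)
  let W := WithLp 2 (E × V)
  -- choose r with closedBall x₀ r ⊆ Ω
  obtain ⟨r, hr, hrΩ⟩ : ∃ r > 0, closedBall x₀ r ⊆ Ω :=
    (Metric.nhds_basis_closedBall.mem_iff).1 (hΩ.mem_nhds hx₀)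
  refine ⟨r / 2, by positivity, fun p hp => ?_⟩
  -- the graph map
  set F : E → W := fun x => (WithLp.equiv 2 (E × V)).symm (x, f x) with hF
  have hFfst : ∀ x : E, (F x).fst = x := fun _ => rfl
  -- the squared distance function
  set g : E → ℝ := fun x => ‖p - F x‖ ^ 2 with hg
  -- continuity on the closed ball
  have hFc : ContinuousOn F (closedBall x₀ r) := by
    have : ContinuousOn f (closedBall x₀ r) := fun x hx =>
      ((hf x (hrΩ hx)).continuousAt).continuousWithinAt
    exact ((WithLp.prodContinuousLinearEquiv 2 ℝ E V).symm.continuous.comp_continuousOn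
      (continuousOn_id.prodMk this))
  have hgc : ContinuousOn g (closedBall x₀ r) :=
    ((continuous_const.sub continuous_id).norm.pow 2).comp_continuousOn hFc |>.congr
      fun x hx => rfl
  -- minimizer
  obtain ⟨z, hzball, hzmin⟩ :=
    (isCompact_closedBall x₀ r).exists_isMinOn ⟨x₀, mem_closedBall_self hr.le⟩ hgc
  have hz0 : g z ≤ g x₀ := hzmin (mem_closedBall_self hr.le)
  -- distance comparisons: ‖a.fst‖ ≤ ‖a‖ for a : W
  have hfst : ∀ a : W, ‖a.fst‖ ≤ ‖a‖ := by
    intro a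
    have h2 : ‖a‖ ^ 2 = ‖a.fst‖ ^ 2 + ‖a.snd‖ ^ 2 := WithLp.prod_norm_sq_eq_of_L2 a
    nlinarith [norm_nonneg a, norm_nonneg a.fst, norm_nonneg a.snd, sq_nonneg ‖a.snd‖]
  have hpx₀ : ‖p - F x₀‖ < r / 2 := by
    have := mem_ball.1 hp
    rwa [dist_eq_norm] at this
  have hpz : ‖p - F z‖ ≤ ‖p - F x₀‖ := by
    have := hz0
    simp only [hg] at this
    nlinarith [norm_nonneg (p - F z), norm_nonneg (p - F x₀)]
  -- z is in the open ball
  have hzlt : ‖z - x₀‖ < r := by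
    have h1 : ‖(p - F z).fst‖ ≤ ‖p - F z‖ := hfst _
    have h2 : ‖(p - F x₀).fst‖ ≤ ‖p - F x₀‖ := hfst _
    have e1 : (p - F z).fst = p.fst - z := rfl
    have e2 : (p - F x₀).fst = p.fst - x₀ := rfl
    rw [e1] at h1; rw [e2] at h2
    calc ‖z - x₀‖ ≤ ‖p.fst - z‖ + ‖p.fst - x₀‖ := by
          have : z - x₀ = -(p.fst - z) + (p.fst - x₀) := by abel
          rw [this]; exact (norm_add_le _ _).trans (by rw [norm_neg])
      _ < r / 2 + r / 2 := by
          have := h1.trans (hpz.trans hpx₀.le)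
          have := h2.trans hpx₀.le
          have h3 : ‖p.fst - z‖ < r / 2 ∨ ‖p.fst - z‖ = r/2 := lt_or_eq_of_le ‹‖p.fst - z‖ ≤ r/2›
          nlinarith [h1.trans (hpz.trans hpx₀.le), h2.trans_lt hpx₀]
      _ = r := by ring
  have hzΩ : z ∈ Ω := hrΩ (mem_closedBall.2 (by rw [dist_eq_norm]; exact hzlt.le))
  -- derivative of F at z
  set L : E →L[ℝ] W :=
    ((WithLp.prodContinuousLinearEquiv 2 ℝ E V).symm :
      (E × V) →L[ℝ] W).comp ((ContinuousLinearMap.id ℝ E).prod (Df z)) with hL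
  have hLapp : ∀ v : E, L v = (WithLp.equiv 2 (E × V)).symm (v, Df z v) := fun _ => rfl
  have hFd : HasFDerivAt F L z := by
    have h1 : HasFDerivAt (fun x : E => (x, f x))
        ((ContinuousLinearMap.id ℝ E).prod (Df z)) z :=
      (hasFDerivAt_id z).prodMk (hf z hzΩ)
    exact ((WithLp.prodContinuousLinearEquiv 2 ℝ E V).symm.hasFDerivAt).comp z h1
  -- derivative of g at z
  have hhd : HasFDerivAt (fun x => p - F x) (-L) z := hFd.const_sub p
  have hgd : HasFDerivAt g
      ((fderivInnerCLM ℝ (p - F z, p - F z)).comp ((-L).prod (-L))) z := by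
    have := (hhd.inner ℝ hhd)
    refine this.congr_fderiv rfl |>.congr_of_eventuallyEq ?_
    filter_upwards with x
    rw [hg, real_inner_self_eq_norm_sq]
  -- z is a local min
  have hnhds : closedBall x₀ r ∈ nhds z := by
    refine Filter.mem_of_superset (Metric.isOpen_ball.mem_nhds ?_) ball_subset_closedBall
    rwa [mem_ball, dist_eq_norm]
  have hloc : IsLocalMin g z := hzmin.isLocalMin hnhds
  have hD0 := hloc.hasFDerivAt_eq_zero hgd
  -- orthogonality
  have horth : ∀ v : E, ⟪L v, p - F z⟫ = 0 := by
    intro v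
    have := congrArg (fun (T : E →L[ℝ] ℝ) => T v) hD0
    simp only [ContinuousLinearMap.comp_apply, ContinuousLinearMap.prod_apply,
      ContinuousLinearMap.neg_apply, ContinuousLinearMap.zero_apply,
      fderivInnerCLM_apply, inner_neg_left, inner_neg_right] at this
    have hsym : ⟪p - F z, L v⟫ = ⟪L v, p - F z⟫ := real_inner_comm _ _
    linarith [this, hsym ▸ this]
  refine ⟨z, hzΩ, p - F z, ?_, (eq_add_of_sub_eq' rfl)⟩
  rw [Submodule.mem_orthogonal]
  intro u hu
  induction hu using Submodule.span_induction with
  | mem u hu =>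
      obtain ⟨v, rfl⟩ := hu
      exact horth v
  | zero => exact inner_zero_left _
  | add u₁ u₂ _ _ h1 h2 => rw [inner_add_left, h1, h2, add_zero]
  | smul c u _ h => rw [real_inner_smul_left, h, mul_zero]
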